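/- Let T be a Markov operator on L¹([0,1], λ). Then the collections σ_T and σ*_T are σ-algebras of Borel subsets of [0,1]: each contains ∅ and [0,1], is closed under complementation (in [0,1]), and is closed under countable unions. -/

import Mathlib

open MeasureTheory Set unitInterval

noncomputable section

open Classical in
/-- The indicator function `𝟙_S` of a set `S ⊆ [0,1]`, as an element of `L¹([0,1], λ)`
(where `λ` is Lebesgue measure on the unit interval `I = [0,1]`).
If `S` is not measurable we default to `0`. -/
def ind (S : Set I) : Lp ℝ 1 (volume : Measure I) :=
  if hS : MeasurableSet S then indicatorConstLp 1 hS (measure_ne_top _ _) (1:ℝ) else 0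

/-- A Markov operator on `L¹([0,1], λ)`: a bounded linear operator `T` with
(i) `T𝟙 = 𝟙`, (ii) `∫ Tψ = ∫ ψ` for all `ψ ∈ L¹`, (iii) `Tψ ≥ 0` a.e. whenever `ψ ≥ 0` a.e. -/
structure IsMarkovOperator
    (T : Lp ℝ 1 (volume : Measure I) →L[ℝ] Lp ℝ 1 (volume : Measure I)) : Prop where
  map_one : T (ind univ) = ind univ
  integral_map : ∀ ψ : Lp ℝ 1 (volume : Measure I), ∫ x, (T ψ) x = ∫ x, ψ x
  positive : ∀ ψ : Lp ℝ 1 (volume : Measure I), 0 ≤ᵐ[volume] ⇑ψ → 0 ≤ᵐ[volume] ⇑(T ψ)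

/-- `σ_T`: the collection of Borel sets `S ⊆ [0,1]` with `T𝟙_S = 𝟙_R` (λ-a.e.) for some Borel
`R ⊆ [0,1]`.  (Equality in `L¹` is exactly λ-a.e. equality.) -/
def sigmaT (T : Lp ℝ 1 (volume : Measure I) →L[ℝ] Lp ℝ 1 (volume : Measure I)) :
    Set (Set I) :=
  {S | MeasurableSet S ∧ ∃ R : Set I, MeasurableSet R ∧ T (ind S) = ind R}

/-- `σ*_T`: the collection of Borel sets `R ⊆ [0,1]` with `T𝟙_S = 𝟙_R` (λ-a.e.) for some Borel
`S ⊆ [0,1]`. -/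
def sigmaTstar (T : Lp ℝ 1 (volume : Measure I) →L[ℝ] Lp ℝ 1 (volume : Measure I)) :
    Set (Set I) :=
  {R | MeasurableSet R ∧ ∃ S : Set I, MeasurableSet S ∧ T (ind S) = ind R}

namespace MarkovAux

lemma ind_coe {S : Set I} (hS : MeasurableSet S) :
    ⇑(ind S) =ᵐ[volume] S.indicator (fun _ => (1:ℝ)) := by
  rw [ind, dif_pos hS]
  exact indicatorConstLp_coeFn

lemma ind_empty : ind (∅ : Set I) = 0 := by
  refine Lp.ext ((ind_coe MeasurableSet.empty).trans ?_)
  rw [Set.indicator_empty]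
  exact (Lp.coeFn_zero _ _ _).symm

lemma ind_nonneg {S : Set I} : 0 ≤ᵐ[volume] ⇑(ind S) := by
  by_cases hS : MeasurableSet S
  · filter_upwards [ind_coe hS] with x hx
    rw [hx]
    exact Set.indicator_nonneg (fun _ _ => zero_le_one) x
  · rw [ind, dif_neg hS]
    filter_upwards [Lp.coeFn_zero ℝ 1 (volume : Measure I)] with x hx
    rw [hx]

lemma ind_compl {S : Set I} (hS : MeasurableSet S) :
    ind Sᶜ = ind (univ : Set I) - ind S := by
  refine Lp.ext ?_
  filter_upwards [ind_coe hS.compl, ind_coe hS, ind_coe MeasurableSet.univ,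
    Lp.coeFn_sub (ind (univ : Set I)) (ind S)] with x h1 h2 h3 h4
  rw [h1, h4, Pi.sub_apply, h2, h3]
  by_cases hx : x ∈ S <;> simp [Set.indicator, hx]

lemma T_mono {T : Lp ℝ 1 (volume : Measure I) →L[ℝ] Lp ℝ 1 (volume : Measure I)}
    (hT : IsMarkovOperator T) {φ ψ : Lp ℝ 1 (volume : Measure I)}
    (h : ⇑φ ≤ᵐ[volume] ⇑ψ) : ⇑(T φ) ≤ᵐ[volume] ⇑(T ψ) := by
  have h0 : 0 ≤ᵐ[volume] ⇑(ψ - φ) := by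
    filter_upwards [Lp.coeFn_sub ψ φ, h] with x hx hle
    rw [hx]
    simpa using hle
  have h1 := hT.positive _ h0
  rw [map_sub] at h1
  filter_upwards [h1, Lp.coeFn_sub (T ψ) (T φ)] with x hx h2
  have := h2 ▸ hx
  simpa using this

lemma T_compl {T : Lp ℝ 1 (volume : Measure I) →L[ℝ] Lp ℝ 1 (volume : Measure I)}
    (hT : IsMarkovOperator T) {S R : Set I} (hS : MeasurableSet S) (hR : MeasurableSet R)
    (h : T (ind S) = ind R) : T (ind Sᶜ) = ind Rᶜ := by
  rw [ind_compl hS, map_sub, hT.map_one, h, ← ind_compl hR]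

lemma T_inter {T : Lp ℝ 1 (volume : Measure I) →L[ℝ] Lp ℝ 1 (volume : Measure I)}
    (hT : IsMarkovOperator T) {S₁ S₂ R₁ R₂ : Set I}
    (hS₁ : MeasurableSet S₁) (hS₂ : MeasurableSet S₂)
    (hR₁ : MeasurableSet R₁) (hR₂ : MeasurableSet R₂)
    (h₁ : T (ind S₁) = ind R₁) (h₂ : T (ind S₂) = ind R₂) :
    T (ind (S₁ ∩ S₂)) = ind (R₁ ∩ R₂) := by
  set h : Lp ℝ 1 (volume : Measure I) := T (ind (S₁ ∩ S₂)) with hh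
  have hpos : 0 ≤ᵐ[volume] ⇑h := hT.positive _ ind_nonneg
  have hle : ∀ (S R : Set I), MeasurableSet S → MeasurableSet R → S₁ ∩ S₂ ⊆ S →
      T (ind S) = ind R → ⇑h ≤ᵐ[volume] ⇑(ind R) := by
    intro S R hS hR hsub hTS
    rw [← hTS]
    refine T_mono hT ?_
    filter_upwards [ind_coe (hS₁.inter hS₂), ind_coe hS] with x hx1 hx2
    rw [hx1, hx2]
    exact Set.indicator_le_indicator_of_subset hsub (fun _ => zero_le_one) x
  have hle₁ : ⇑h ≤ᵐ[volume] ⇑(ind R₁) :=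
    hle S₁ R₁ hS₁ hR₁ Set.inter_subset_left h₁
  have hle₂ : ⇑h ≤ᵐ[volume] ⇑(ind R₂) :=
    hle S₂ R₂ hS₂ hR₂ Set.inter_subset_right h₂
  -- the lower bound: ind R₁ + ind R₂ - h ≤ 1 a.e.
  have key : ⇑(ind R₁ + ind R₂ - h) ≤ᵐ[volume] ⇑(ind (univ : Set I)) := by
    have hsum : ⇑(ind S₁ + ind S₂ - ind (S₁ ∩ S₂)) ≤ᵐ[volume] ⇑(ind (univ : Set I)) := by
      filter_upwards [Lp.coeFn_sub (ind S₁ + ind S₂) (ind (S₁ ∩ S₂)),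
        Lp.coeFn_add (ind S₁) (ind S₂), ind_coe hS₁, ind_coe hS₂,
        ind_coe (hS₁.inter hS₂), ind_coe MeasurableSet.univ] with x e1 e2 e3 e4 e5 e6
      rw [e1, Pi.sub_apply, e2, Pi.add_apply, e3, e4, e5, e6]
      by_cases hx1 : x ∈ S₁ <;> by_cases hx2 : x ∈ S₂ <;>
        simp [Set.indicator, hx1, hx2]
    have := T_mono hT hsum
    rwa [map_sub, map_add, h₁, h₂, hT.map_one, ← hh] at this
  -- conclude h =ᵐ indicator (R₁ ∩ R₂)
  refine Lp.ext ?_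
  filter_upwards [hpos, hle₁, hle₂, key, ind_coe hR₁, ind_coe hR₂,
    ind_coe (hR₁.inter hR₂), ind_coe MeasurableSet.univ,
    Lp.coeFn_sub (ind R₁ + ind R₂) h, Lp.coeFn_add (ind R₁) (ind R₂)]
    with x hp hl1 hl2 hk e1 e2 e3 e4 e5 e6
  rw [e5, Pi.sub_apply, e6, Pi.add_apply, e1, e2, e4] at hk
  rw [e1] at hl1
  rw [e2] at hl2
  rw [e3]
  by_cases hx1 : x ∈ R₁ <;> by_cases hx2 : x ∈ R₂ <;>
    simp only [Set.indicator, hx1, hx2, Set.mem_inter_iff, and_true, and_false,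
      if_true, if_false, Set.mem_univ, true_and] at hl1 hl2 hk ⊢ <;>
    simp_all <;> linarith [hp]
  
lemma T_union {T : Lp ℝ 1 (volume : Measure I) →L[ℝ] Lp ℝ 1 (volume : Measure I)}
    (hT : IsMarkovOperator T) {S₁ S₂ R₁ R₂ : Set I}
    (hS₁ : MeasurableSet S₁) (hS₂ : MeasurableSet S₂)
    (hR₁ : MeasurableSet R₁) (hR₂ : MeasurableSet R₂)
    (h₁ : T (ind S₁) = ind R₁) (h₂ : T (ind S₂) = ind R₂) :
    T (ind (S₁ ∪ S₂)) = ind (R₁ ∪ R₂) := by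
  have := T_compl hT (hS₁.compl.inter hS₂.compl) (hR₁.compl.inter hR₂.compl)
    (T_inter hT hS₁.compl hS₂.compl hR₁.compl hR₂.compl
      (T_compl hT hS₁ hR₁ h₁) (T_compl hT hS₂ hR₂ h₂))
  rwa [Set.compl_inter, compl_compl, compl_compl, Set.compl_inter, compl_compl,
    compl_compl] at this

lemma acc_zero (s : ℕ → Set I) : accumulate s 0 = s 0 := by
  ext x; simp [Set.accumulate_def, Nat.le_zero]

lemma acc_succ (s : ℕ → Set I) (n : ℕ) :
    accumulate s (n + 1) = accumulate s n ∪ s (n + 1) := by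
  ext x
  simp only [Set.accumulate_def, Set.mem_iUnion, Set.mem_union]
  constructor
  · rintro ⟨y, hy, hx⟩
    rcases Nat.lt_or_ge y (n + 1) with hlt | hge
    · exact Or.inl ⟨y, Nat.lt_succ_iff.mp hlt, hx⟩
    · exact Or.inr (by rwa [Nat.le_antisymm hy hge] at hx)
  · rintro (⟨y, hy, hx⟩ | hx)
    · exact ⟨y, hy.trans (Nat.le_succ n), hx⟩
    · exact ⟨n + 1, le_rfl, hx⟩

lemma acc_measurable {s : ℕ → Set I} (hs : ∀ n, MeasurableSet (s n)) (n : ℕ) :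
    MeasurableSet (accumulate s n) := by
  rw [Set.accumulate_def]
  exact MeasurableSet.biUnion (Set.to_countable _) fun i _ => hs i

lemma tendsto_ind_acc {s : ℕ → Set I} (hs : ∀ n, MeasurableSet (s n)) :
    Filter.Tendsto (fun n => ind (accumulate s n)) Filter.atTop (nhds (ind (⋃ n, s n))) := by
  have hU : MeasurableSet (⋃ n, s n) := MeasurableSet.iUnion hs
  have hμ : Filter.Tendsto (fun n => (volume : Measure I) (symmDiff (accumulate s n) (⋃ n, s n)))
      Filter.atTop (nhds 0) := by
    have hmono : Monotone (accumulate s) := monotone_accumulate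
    have h1 : Filter.Tendsto (fun n => (volume : Measure I) (accumulate s n))
        Filter.atTop (nhds ((volume : Measure I) (⋃ n, s n))) := by
      have := tendsto_measure_iUnion_atTop (μ := (volume : Measure I)) hmono
      rwa [Set.iUnion_accumulate] at this
    have h2 : Filter.Tendsto
        (fun n => (volume : Measure I) (⋃ n, s n) - (volume : Measure I) (accumulate s n))
        Filter.atTop (nhds ((volume : Measure I) (⋃ n, s n) - (volume : Measure I) (⋃ n, s n))) :=
      ENNReal.Tendsto.sub tendsto_const_nhds h1 (Or.inl (measure_ne_top _ _))
    rw [tsub_self] at h2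
    refine h2.congr fun n => ?_
    rw [symmDiff_of_le (Set.accumulate_subset_iUnion n),
      measure_diff (Set.accumulate_subset_iUnion n)
        (acc_measurable hs n).nullMeasurableSet (measure_ne_top _ _)]
  have := tendsto_indicatorConstLp_set (c := (1:ℝ)) (hs := hU) (hμs := measure_ne_top _ _)
    (ht := fun n => acc_measurable hs n) (hμt := fun n => measure_ne_top _ _)
    ENNReal.one_ne_top hμ
  have e1 : (fun n => ind (accumulate s n)) =
      fun n => indicatorConstLp 1 (acc_measurable hs n) (measure_ne_top _ _) (1:ℝ) := by
    funext n; rw [ind, dif_pos (acc_measurable hs n)]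
  have e2 : ind (⋃ n, s n) = indicatorConstLp 1 hU (measure_ne_top _ _) (1:ℝ) := by
    rw [ind, dif_pos hU]
  rw [e1, e2]
  exact this

lemma T_iUnion {T : Lp ℝ 1 (volume : Measure I) →L[ℝ] Lp ℝ 1 (volume : Measure I)}
    (hT : IsMarkovOperator T) {f g : ℕ → Set I}
    (hf : ∀ n, MeasurableSet (f n)) (hg : ∀ n, MeasurableSet (g n))
    (h : ∀ n, T (ind (f n)) = ind (g n)) :
    T (ind (⋃ n, f n)) = ind (⋃ n, g n) := by
  have hacc : ∀ n, T (ind (accumulate f n)) = ind (accumulate g n) := by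
    intro n
    induction n with
    | zero => rw [acc_zero, acc_zero]; exact h 0
    | succ n ih =>
        rw [acc_succ, acc_succ]
        exact T_union hT (acc_measurable hf n) (hf (n + 1))
          (acc_measurable hg n) (hg (n + 1)) ih (h (n + 1))
  have t1 : Filter.Tendsto (fun n => T (ind (accumulate f n))) Filter.atTop
      (nhds (T (ind (⋃ n, f n)))) :=
    (T.continuous.tendsto _).comp (tendsto_ind_acc hf)
  have t2 : Filter.Tendsto (fun n => ind (accumulate g n)) Filter.atTop
      (nhds (ind (⋃ n, g n))) := tendsto_ind_acc hg
  exact tendsto_nhds_unique (t1.congr fun n => hacc n) t2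

end MarkovAux

open MarkovAux in
/-- For a Markov operator `T` on `L¹([0,1], λ)`, the collections `σ_T` and
`σ*_T` are σ-algebras of Borel subsets of `[0,1]`: each contains `∅` and `[0,1]` (i.e. `univ`),
is closed under complementation (in `[0,1]`), and is closed under countable unions. -/
theorem stmt2
    (T : Lp ℝ 1 (volume : Measure I) →L[ℝ] Lp ℝ 1 (volume : Measure I))
    (hT : IsMarkovOperator T) :
    ((∅ : Set I) ∈ sigmaT T ∧ (univ : Set I) ∈ sigmaT T ∧
      (∀ S ∈ sigmaT T, Sᶜ ∈ sigmaT T) ∧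
      (∀ f : ℕ → Set I, (∀ n, f n ∈ sigmaT T) → (⋃ n, f n) ∈ sigmaT T)) ∧
    ((∅ : Set I) ∈ sigmaTstar T ∧ (univ : Set I) ∈ sigmaTstar T ∧
      (∀ R ∈ sigmaTstar T, Rᶜ ∈ sigmaTstar T) ∧
      (∀ f : ℕ → Set I, (∀ n, f n ∈ sigmaTstar T) → (⋃ n, f n) ∈ sigmaTstar T)) := by
  have hempty : T (ind (∅ : Set I)) = ind (∅ : Set I) := by
    rw [ind_empty, map_zero]
  constructor
  · refine ⟨⟨MeasurableSet.empty, ∅, MeasurableSet.empty, hempty⟩,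
      ⟨MeasurableSet.univ, univ, MeasurableSet.univ, hT.map_one⟩, ?_, ?_⟩
    · rintro S ⟨hS, R, hR, hTS⟩
      exact ⟨hS.compl, Rᶜ, hR.compl, T_compl hT hS hR hTS⟩
    · intro f hf
      choose hfm g hgm hfg using hf
      exact ⟨MeasurableSet.iUnion hfm, ⋃ n, g n, MeasurableSet.iUnion hgm,
        T_iUnion hT hfm hgm hfg⟩
  · refine ⟨⟨MeasurableSet.empty, ∅, MeasurableSet.empty, hempty⟩,
      ⟨MeasurableSet.univ, univ, MeasurableSet.univ, hT.map_one⟩, ?_, ?_⟩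
    · rintro R ⟨hR, S, hS, hTS⟩
      exact ⟨hR.compl, Sᶜ, hS.compl, T_compl hT hS hR hTS⟩
    · intro f hf
      choose hfm g hgm hfg using hf
      exact ⟨MeasurableSet.iUnion hfm, ⋃ n, g n, MeasurableSet.iUnion hgm,
        T_iUnion hT hgm hfm hfg⟩
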